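/- Let A ∈ 𝔽^{n×n} have all off-diagonal entries nonzero, let S ⊆ [n] be a cut of A, and let s ∈ S and t ∈ S̄. Let M be a matrix indexed by S ∪ {t} with M ≡PME A[S ∪ {t}], and let N be a matrix indexed by {s} ∪ S̄ with N ≡PME A[{s} ∪ S̄]. Then N[s,t], N[t,s], M[s,t], M[t,s] are all nonzero, and the matrix A' ∈ 𝔽^{n×n} defined by A'[i,j] = M[i,j] for i, j ∈ S; A'[i,j] = M[i,t]·N[s,j] / N[s,t] for i ∈ S and j ∈ S̄; A'[i,j] = N[i,s]·M[t,j] / N[t,s] for i ∈ S̄ and j ∈ S; and A'[i,j] = N[i,j] for i, j ∈ S̄, satisfies A' ≡PME A. -/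

import Mathlib

namespace PMAP

open Matrix

variable {K : Type*}

/-- The submatrix of a square matrix `A` with rows indexed by `S` and columns indexed by `T`. -/
def subm {m : Type*} (A : Matrix m m K) (S T : Finset m) : Matrix S T K :=
  Matrix.of fun i j => A i.1 j.1

/-- The principal minor of `A` indexed by `S`. -/
noncomputable def pminor {m : Type*} [DecidableEq m] [CommRing K]
    (A : Matrix m m K) (S : Finset m) : K :=
  (subm A S S).det

/-- `A` and `B` are principal minor equivalent. -/
def PME {m : Type*} [DecidableEq m] [CommRing K] (A B : Matrix m m K) : Prop :=
  ∀ S : Finset m, S.Nonempty → pminor A S = pminor B S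

/-- `A` and `B` are principal minor equivalent up to order `k`. -/
def PMEupto {m : Type*} [DecidableEq m] [CommRing K] (k : ℕ) (A B : Matrix m m K) : Prop :=
  ∀ S : Finset m, S.Nonempty → S.card ≤ k → pminor A S = pminor B S

/-- `X` is a cut of the principal submatrix `A[I]`. -/
def IsCutOn {m : Type*} [DecidableEq m] [Field K] (A : Matrix m m K) (I X : Finset m) : Prop :=
  X ⊆ I ∧ 2 ≤ X.card ∧ X.card + 2 ≤ I.card ∧
    (subm A X (I \ X)).rank ≤ 1 ∧ (subm A (I \ X) X).rank ≤ 1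

/-- `X` is a cut of `A`. -/
def IsCut {m : Type*} [Fintype m] [DecidableEq m] [Field K] (A : Matrix m m K)
    (X : Finset m) : Prop :=
  IsCutOn A Finset.univ X

/-- Property `R`: all off-diagonal entries are nonzero, and every rank-one `2×2`
submatrix `A[{i,j},{k,ℓ}]` (with `i,j,k,ℓ` distinct) extends to a rank-one submatrix
`A[X, Xᶜ]` with `i,j ∈ X` and `k,ℓ ∈ Xᶜ`. -/
def PropR {m : Type*} [Fintype m] [DecidableEq m] [Field K] (A : Matrix m m K) : Prop :=
  (∀ i j : m, i ≠ j → A i j ≠ 0) ∧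
    ∀ i j k l : m, i ≠ j → i ≠ k → i ≠ l → j ≠ k → j ≠ l → k ≠ l →
      (subm A {i, j} {k, l}).rank = 1 →
      ∃ X : Finset m, i ∈ X ∧ j ∈ X ∧ k ∉ X ∧ l ∉ X ∧ (subm A X Xᶜ).rank = 1

/-- `A` is diagonally similar to `B`: `B = D⁻¹ A D` for an invertible diagonal matrix `D`. -/
def DiagSim {m : Type*} [Field K] (A B : Matrix m m K) : Prop :=
  ∃ D : m → K, (∀ i, D i ≠ 0) ∧ ∀ i j, B i j = (D i)⁻¹ * A i j * D j

/-- The set `D₁(A,B)` of indices `i` with `A[[n]∖{i}]` diagonally similar to `B[[n]∖{i}]`. -/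
def D1 {n : ℕ} [Field K] (A B : Matrix (Fin n) (Fin n) K) : Set (Fin n) :=
  {i | DiagSim (subm A {i}ᶜ {i}ᶜ) (subm B {i}ᶜ {i}ᶜ)}

/-- The set `D₂(A,B)` of indices `i` with `A[[n]∖{i}]` diagonally similar to `B[[n]∖{i}]ᵀ`. -/
def D2 {n : ℕ} [Field K] (A B : Matrix (Fin n) (Fin n) K) : Set (Fin n) :=
  {i | DiagSim (subm A {i}ᶜ {i}ᶜ) (subm B {i}ᶜ {i}ᶜ)ᵀ}

/-- The pair `{{i,j},{k,l}}` satisfies property `P` for `A`: there is a matrix `C`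
principal minor equivalent to `A[{i,j,k,l}]` in which `{i,j}` is a cut. -/
def PropP {n : ℕ} [Field K] (A : Matrix (Fin n) (Fin n) K) (i j k l : Fin n) : Prop :=
  ∃ C : Matrix (Fin n) (Fin n) K,
    (∀ S : Finset (Fin n), S.Nonempty → S ⊆ {i, j, k, l} → pminor C S = pminor A S) ∧
    IsCutOn C {i, j, k, l} {i, j}

/-- `A` is irreducible: it cannot be brought to block upper triangular form
by a simultaneous permutation of rows and columns. -/
def Irred {m : Type*} [Fintype m] [Zero K] (A : Matrix m m K) : Prop :=
  ∀ S : Finset m, S.Nonempty → S ≠ Finset.univ → ∃ i, i ∉ S ∧ ∃ j ∈ S, A i j ≠ 0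



section Aux

variable [CommRing K]


private lemma det_one_smul_row {ι : Type*} [DecidableEq ι] [Fintype ι]
    (M : Matrix ι ι K) (r : ι) (v : ι → K) (c : K) (h : M r = c • v) :
    M.det = c * (M.updateRow r v).det := by
  conv_lhs => rw [← Matrix.updateRow_eq_self M r, h]
  rw [Matrix.det_updateRow_smul]

private lemma det_two_smul_rows {ι : Type*} [DecidableEq ι] [Fintype ι]
    (M : Matrix ι ι K) (r₁ r₂ : ι) (h : r₁ ≠ r₂) (v₁ v₂ : ι → K) (c₁ c₂ : K)
    (h₁ : M r₁ = c₁ • v₁) (h₂ : M r₂ = c₂ • v₂) :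
    M.det = c₁ * (c₂ * ((M.updateRow r₁ v₁).updateRow r₂ v₂).det) := by
  rw [det_one_smul_row M r₁ v₁ c₁ h₁,
    det_one_smul_row (M.updateRow r₁ v₁) r₂ v₂ c₂
      (by rw [Matrix.updateRow_ne h.symm]; exact h₂)]

private lemma det_zero_of_prop_rows {ι : Type*} [DecidableEq ι] [Fintype ι]
    (M : Matrix ι ι K) (r₁ r₂ : ι) (h : r₁ ≠ r₂) (v : ι → K) (c₁ c₂ : K)
    (h₁ : M r₁ = c₁ • v) (h₂ : M r₂ = c₂ • v) : M.det = 0 := by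
  rw [det_two_smul_rows M r₁ r₂ h v v c₁ c₂ h₁ h₂]
  have : ((M.updateRow r₁ v).updateRow r₂ v).det = 0 := by
    apply Matrix.det_zero_of_row_eq h
    rw [Matrix.updateRow_ne h, Matrix.updateRow_self, Matrix.updateRow_self]
  rw [this]; ring

theorem det_fromBlocks_rankOne {m₁ m₂ : Type*} [Fintype m₁] [Fintype m₂]
    [DecidableEq m₁] [DecidableEq m₂]
    (B₁ : Matrix m₁ m₁ K) (B₂ : Matrix m₂ m₂ K) (x w : m₁ → K) (y z : m₂ → K) :
    (Matrix.fromBlocks B₁ (Matrix.of fun i j => x i * y j)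
      (Matrix.of fun j i => z j * w i) B₂).det
      = B₁.det * B₂.det
        - (∑ i, x i * (B₁.updateRow i w).det) * (∑ j, z j * (B₂.updateRow j y).det) := by
  classical
  set f : m₁ ⊕ m₂ → (m₁ ⊕ m₂ → K) :=
    Sum.elim (fun i => Sum.elim (B₁ i) 0) (fun j => Sum.elim 0 (B₂ j)) with hf
  set g : m₁ ⊕ m₂ → (m₁ ⊕ m₂ → K) :=
    Sum.elim (fun i => x i • Sum.elim (0 : m₁ → K) y)
      (fun j => z j • Sum.elim w (0 : m₂ → K)) with hg
  have hM : (Matrix.fromBlocks B₁ (Matrix.of fun i j => x i * y j)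
      (Matrix.of fun j i => z j * w i) B₂) = g + f := by
    funext r c
    cases r <;> cases c <;>
      simp [hf, hg, Matrix.fromBlocks, Pi.add_apply, smul_eq_mul, mul_comm]
  rw [hM]
  have hdet : ∀ N : Matrix (m₁ ⊕ m₂) (m₁ ⊕ m₂) K,
      (Matrix.detRowAlternating : (m₁ ⊕ m₂ → K) [⋀^(m₁ ⊕ m₂)]→ₗ[K] K).toMultilinearMap N
        = N.det := fun _ => rfl
  have expand' : Matrix.det (g + f)
      = ∑ U : Finset (m₁ ⊕ m₂), Matrix.det (U.piecewise g f) := by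
    rw [← hdet (g + f)]
    exact ((Matrix.detRowAlternating :
      (m₁ ⊕ m₂ → K) [⋀^(m₁ ⊕ m₂)]→ₗ[K] K).toMultilinearMap.map_add_univ g f).trans
      (Finset.sum_congr rfl fun U _ => hdet _)
  rw [expand']
  -- the collection of "surviving" index sets
  set P : Finset (Finset (m₁ ⊕ m₂)) :=
    insert ∅ (Finset.univ.image fun p : m₁ × m₂ =>
      ({Sum.inl p.1, Sum.inr p.2} : Finset (m₁ ⊕ m₂))) with hP
  -- rows of the piecewise matrix
  have hrowg : ∀ (U : Finset (m₁ ⊕ m₂)) r, r ∈ U → U.piecewise g f r = g r :=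
    fun U r h => Finset.piecewise_eq_of_mem U g f h
  have hrowf : ∀ (U : Finset (m₁ ⊕ m₂)) r, r ∉ U → U.piecewise g f r = f r :=
    fun U r h => Finset.piecewise_eq_of_notMem U g f h
  -- two lefts (or two rights) kill the determinant
  have hzL : ∀ (U : Finset (m₁ ⊕ m₂)) i₁ i₂, i₁ ≠ i₂ → Sum.inl i₁ ∈ U → Sum.inl i₂ ∈ U →
      Matrix.det (U.piecewise g f) = 0 := by
    intro U i₁ i₂ hne h₁ h₂
    exact det_zero_of_prop_rows _ (Sum.inl i₁) (Sum.inl i₂) (by simpa using hne)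
      (Sum.elim 0 y) (x i₁) (x i₂) (by rw [hrowg U _ h₁]; rfl) (by rw [hrowg U _ h₂]; rfl)
  have hzR : ∀ (U : Finset (m₁ ⊕ m₂)) j₁ j₂, j₁ ≠ j₂ → Sum.inr j₁ ∈ U → Sum.inr j₂ ∈ U →
      Matrix.det (U.piecewise g f) = 0 := by
    intro U j₁ j₂ hne h₁ h₂
    exact det_zero_of_prop_rows _ (Sum.inr j₁) (Sum.inr j₂) (by simpa using hne)
      (Sum.elim w 0) (z j₁) (z j₂) (by rw [hrowg U _ h₁]; rfl) (by rw [hrowg U _ h₂]; rfl)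
  -- a lone left (or right) also kills it
  have hsingL : ∀ i : m₁,
      Matrix.det (({Sum.inl i} : Finset (m₁ ⊕ m₂)).piecewise g f) = 0 := by
    intro i
    set U : Finset (m₁ ⊕ m₂) := {Sum.inl i}
    rw [det_one_smul_row (U.piecewise g f) (Sum.inl i) (Sum.elim 0 y) (x i)
      (by rw [hrowg U _ (Finset.mem_singleton_self _)]; rfl)]
    have hEq : Matrix.updateRow (U.piecewise g f) (Sum.inl i) (Sum.elim 0 y)
        = Matrix.fromBlocks (B₁.updateRow i 0)
            (Matrix.of fun i' j => if i' = i then y j else 0) 0 B₂ := by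
      funext r c
      rcases r with i' | j'
      · by_cases hii : i' = i
        · subst hii
          cases c <;> simp [Matrix.updateRow_self (M := U.piecewise g f), Matrix.fromBlocks]
        · rw [Matrix.updateRow_ne (M := U.piecewise g f) (by simpa using hii),
            hrowf U _ (by simpa [U] using hii)]
          cases c <;> simp [hf, Matrix.fromBlocks, Matrix.updateRow_ne hii, hii]
      · rw [Matrix.updateRow_ne (M := U.piecewise g f) (by simp),
          hrowf U _ (by simp [U])]
        cases c <;> simp [hf, Matrix.fromBlocks]
    rw [hEq, Matrix.det_fromBlocks_zero₂₁,
      Matrix.det_eq_zero_of_row_eq_zero i (fun j => by simp)]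
    ring
  have hsingR : ∀ j : m₂,
      Matrix.det (({Sum.inr j} : Finset (m₁ ⊕ m₂)).piecewise g f) = 0 := by
    intro j
    set U : Finset (m₁ ⊕ m₂) := {Sum.inr j}
    rw [det_one_smul_row (U.piecewise g f) (Sum.inr j) (Sum.elim w 0) (z j)
      (by rw [hrowg U _ (Finset.mem_singleton_self _)]; rfl)]
    have hEq : Matrix.updateRow (U.piecewise g f) (Sum.inr j) (Sum.elim w 0)
        = Matrix.fromBlocks B₁ 0
            (Matrix.of fun j' i' => if j' = j then w i' else 0) (B₂.updateRow j 0) := by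
      funext r c
      rcases r with i' | j'
      · rw [Matrix.updateRow_ne (M := U.piecewise g f) (by simp),
          hrowf U _ (by simp [U])]
        cases c <;> simp [hf, Matrix.fromBlocks]
      · by_cases hjj : j' = j
        · subst hjj
          cases c <;> simp [Matrix.updateRow_self (M := U.piecewise g f), Matrix.fromBlocks]
        · rw [Matrix.updateRow_ne (M := U.piecewise g f) (by simpa using hjj),
            hrowf U _ (by simpa [U] using hjj)]
          cases c <;> simp [hf, Matrix.fromBlocks, Matrix.updateRow_ne hjj, hjj]
    rw [hEq, Matrix.det_fromBlocks_zero₁₂,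
      Matrix.det_eq_zero_of_row_eq_zero j (fun i => by simp)]
    ring
  -- value of a pair
  have hpair : ∀ (i : m₁) (j : m₂),
      Matrix.det (({Sum.inl i, Sum.inr j} : Finset (m₁ ⊕ m₂)).piecewise g f)
        = -(x i * z j * ((B₁.updateRow i w).det * (B₂.updateRow j y).det)) := by
    intro i j
    set U : Finset (m₁ ⊕ m₂) := {Sum.inl i, Sum.inr j}
    rw [det_two_smul_rows (U.piecewise g f) (Sum.inl i) (Sum.inr j) (by simp)
      (Sum.elim 0 y) (Sum.elim w 0) (x i) (z j)
      (by rw [hrowg U _ (by simp [U])]; rfl) (by rw [hrowg U _ (by simp [U])]; rfl)]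
    set M₂ : Matrix (m₁ ⊕ m₂) (m₁ ⊕ m₂) K :=
      Matrix.updateRow (Matrix.updateRow (U.piecewise g f) (Sum.inl i) (Sum.elim 0 y))
        (Sum.inr j) (Sum.elim w 0) with hM₂
    have hswap := Matrix.det_permute (Equiv.swap (Sum.inl i) (Sum.inr j)) M₂
    have hsub : M₂.submatrix (Equiv.swap (Sum.inl i) (Sum.inr j)) id
        = Matrix.fromBlocks (B₁.updateRow i w) 0 0 (B₂.updateRow j y) := by
      funext r c
      rcases r with i' | j'
      · by_cases hii : i' = i
        · subst hii
          have : (Equiv.swap (Sum.inl i' : m₁ ⊕ m₂) (Sum.inr j)) (Sum.inl i') = Sum.inr j :=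
            Equiv.swap_apply_left _ _
          rw [Matrix.submatrix_apply, this, id_eq, hM₂, Matrix.updateRow_self]
          cases c <;> simp [Matrix.fromBlocks, Matrix.updateRow_self]
        · have : (Equiv.swap (Sum.inl i : m₁ ⊕ m₂) (Sum.inr j)) (Sum.inl i') = Sum.inl i' :=
            Equiv.swap_apply_of_ne_of_ne (by simpa using hii) (by simp)
          rw [Matrix.submatrix_apply, this, id_eq, hM₂,
            Matrix.updateRow_ne (by simp), Matrix.updateRow_ne (M := U.piecewise g f) (by simpa using hii),
            hrowf U _ (by simp [U, hii])]
          cases c <;> simp [hf, Matrix.fromBlocks, Matrix.updateRow_ne hii]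
      · by_cases hjj : j' = j
        · subst hjj
          have : (Equiv.swap (Sum.inl i : m₁ ⊕ m₂) (Sum.inr j')) (Sum.inr j') = Sum.inl i :=
            Equiv.swap_apply_right _ _
          rw [Matrix.submatrix_apply, this, id_eq, hM₂,
            Matrix.updateRow_ne (by simp), Matrix.updateRow_self (M := U.piecewise g f)]
          cases c <;> simp [Matrix.fromBlocks, Matrix.updateRow_self]
        · have : (Equiv.swap (Sum.inl i : m₁ ⊕ m₂) (Sum.inr j)) (Sum.inr j') = Sum.inr j' :=
            Equiv.swap_apply_of_ne_of_ne (by simp) (by simpa using hjj)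
          rw [Matrix.submatrix_apply, this, id_eq, hM₂,
            Matrix.updateRow_ne (by simpa using hjj), Matrix.updateRow_ne (M := U.piecewise g f) (by simp),
            hrowf U _ (by simp [U, hjj])]
          cases c <;> simp [hf, Matrix.fromBlocks, Matrix.updateRow_ne hjj]
    rw [hsub] at hswap
    have hsign : ((Equiv.Perm.sign (Equiv.swap (Sum.inl i : m₁ ⊕ m₂) (Sum.inr j)) : ℤ) : K)
        = -1 := by
      rw [Equiv.Perm.sign_swap (by simp)]; simp
    have : M₂.det = -((B₁.updateRow i w).det * (B₂.updateRow j y).det) := by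
      rw [Matrix.det_fromBlocks_zero₂₁] at hswap
      rw [hsign] at hswap
      linear_combination hswap
    rw [this]; ring
  -- classification of surviving sets
  have hclass : ∀ U ∈ (Finset.univ : Finset (Finset (m₁ ⊕ m₂))), U ∉ P →
      Matrix.det (U.piecewise g f) = 0 := by
    intro U _ hU
    by_cases hL2 : ∀ i₁ i₂ : m₁, Sum.inl i₁ ∈ U → Sum.inl i₂ ∈ U → i₁ = i₂
    · by_cases hR2 : ∀ j₁ j₂ : m₂, Sum.inr j₁ ∈ U → Sum.inr j₂ ∈ U → j₁ = j₂
      · by_cases hLe : ∃ i, Sum.inl i ∈ U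
        · obtain ⟨i, hi⟩ := hLe
          by_cases hRe : ∃ j, Sum.inr j ∈ U
          · obtain ⟨j, hj⟩ := hRe
            exfalso
            apply hU
            have : U = {Sum.inl i, Sum.inr j} := by
              ext r
              constructor
              · intro hr
                rcases r with i' | j'
                · simp [hL2 i' i hr hi]
                · simp [hR2 j' j hr hj]
              · intro hr
                rcases Finset.mem_insert.mp hr with h | h
                · rwa [h]
                · rw [Finset.mem_singleton.mp h]; exact hj
            rw [hP, this]
            exact Finset.mem_insert_of_mem
              (Finset.mem_image.mpr ⟨(i, j), Finset.mem_univ _, rfl⟩)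
          · push_neg at hRe
            have : U = {Sum.inl i} := by
              ext r
              constructor
              · intro hr
                rcases r with i' | j'
                · simp [hL2 i' i hr hi]
                · exact absurd hr (hRe j')
              · intro hr
                rw [Finset.mem_singleton.mp hr]; exact hi
            rw [this]; exact hsingL i
        · push_neg at hLe
          by_cases hRe : ∃ j, Sum.inr j ∈ U
          · obtain ⟨j, hj⟩ := hRe
            have : U = {Sum.inr j} := by
              ext r
              constructor
              · intro hr
                rcases r with i' | j'
                · exact absurd hr (hLe i')
                · simp [hR2 j' j hr hj]
              · intro hr
                rw [Finset.mem_singleton.mp hr]; exact hj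
            rw [this]; exact hsingR j
          · push_neg at hRe
            exfalso
            apply hU
            have : U = ∅ := by
              ext r
              simp only [Finset.notMem_empty, iff_false]
              rcases r with i' | j'
              · exact hLe i'
              · exact hRe j'
            rw [hP, this]; exact Finset.mem_insert_self _ _
      · push_neg at hR2
        obtain ⟨j₁, j₂, h₁, h₂, hne⟩ := hR2
        exact hzR U j₁ j₂ hne h₁ h₂
    · push_neg at hL2
      obtain ⟨i₁, i₂, h₁, h₂, hne⟩ := hL2
      exact hzL U i₁ i₂ hne h₁ h₂
  rw [← Finset.sum_subset (Finset.subset_univ P) (fun U hU hUP => hclass U hU hUP)]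
  have hemp : (∅ : Finset (m₁ ⊕ m₂)) ∉ (Finset.univ.image fun p : m₁ × m₂ =>
      ({Sum.inl p.1, Sum.inr p.2} : Finset (m₁ ⊕ m₂))) := by
    simp only [Finset.mem_image, Finset.mem_univ, true_and, not_exists]
    intro p h
    first
    | exact Finset.insert_ne_empty _ _ h
    | exact Finset.insert_ne_empty _ _ h.symm
  rw [hP, Finset.sum_insert hemp]
  have hvemp : Matrix.det ((∅ : Finset (m₁ ⊕ m₂)).piecewise g f) = B₁.det * B₂.det := by
    rw [Finset.piecewise_empty]
    have : (f : Matrix (m₁ ⊕ m₂) (m₁ ⊕ m₂) K) = Matrix.fromBlocks B₁ 0 0 B₂ := by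
      funext r c
      cases r <;> cases c <;> simp [hf, Matrix.fromBlocks]
    rw [this, Matrix.det_fromBlocks_zero₂₁]
  have hinj : ∀ p ∈ (Finset.univ : Finset (m₁ × m₂)), ∀ q ∈ (Finset.univ : Finset (m₁ × m₂)),
      ({Sum.inl p.1, Sum.inr p.2} : Finset (m₁ ⊕ m₂)) = {Sum.inl q.1, Sum.inr q.2} → p = q := by
    intro p _ q _ h
    have h1 : (Sum.inl p.1 : m₁ ⊕ m₂) ∈ ({Sum.inl q.1, Sum.inr q.2} : Finset (m₁ ⊕ m₂)) := by
      rw [← h]; simp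
    have h2 : (Sum.inr p.2 : m₁ ⊕ m₂) ∈ ({Sum.inl q.1, Sum.inr q.2} : Finset (m₁ ⊕ m₂)) := by
      rw [← h]; simp
    simp only [Finset.mem_insert, Finset.mem_singleton] at h1 h2
    rcases h1 with h1 | h1
    · rcases h2 with h2 | h2
      · exact absurd h2 (by simp)
      · exact Prod.ext (by simpa using h1) (by simpa using h2)
    · exact absurd h1 (by simp)
  rw [Finset.sum_image hinj, hvemp]
  have : ∑ p : m₁ × m₂,
      Matrix.det (({Sum.inl p.1, Sum.inr p.2} : Finset (m₁ ⊕ m₂)).piecewise g f)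
      = -((∑ i, x i * (B₁.updateRow i w).det) * (∑ j, z j * (B₂.updateRow j y).det)) := by
    rw [Finset.sum_mul_sum]
    rw [← Finset.sum_neg_distrib]
    rw [Fintype.sum_prod_type]
    apply Finset.sum_congr rfl
    intro i _
    rw [← Finset.sum_neg_distrib]
    apply Finset.sum_congr rfl
    intro j _
    rw [hpair i j]; ring
  rw [this]; ring


/-- If a matrix has rank at most one, all its `2 × 2` minors vanish. -/
private lemma rank_le_one_cross {L : Type*} [Field L] {m₁ m₂ : Type*} [Fintype m₁] [Fintype m₂]
    {B : Matrix m₁ m₂ L} (h : B.rank ≤ 1) (i₁ i₂ : m₁) (j₁ j₂ : m₂) :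
    B i₁ j₁ * B i₂ j₂ = B i₁ j₂ * B i₂ j₁ := by
  classical
  rw [Matrix.rank] at h
  obtain ⟨v, hv⟩ := finrank_le_one_iff.mp h
  obtain ⟨c₁, hc₁⟩ := hv ⟨B.mulVec (Pi.single j₁ 1),
    ⟨Pi.single j₁ 1, by simp [Matrix.mulVecLin_apply]⟩⟩
  obtain ⟨c₂, hc₂⟩ := hv ⟨B.mulVec (Pi.single j₂ 1),
    ⟨Pi.single j₂ 1, by simp [Matrix.mulVecLin_apply]⟩⟩
  have e₁ : ∀ i, B i j₁ = c₁ * (v : m₁ → L) i := by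
    intro i
    have h' := congrFun (congrArg Subtype.val hc₁) i
    simp only [Matrix.mulVec_single, mul_one] at h'
    simpa using h'.symm
  have e₂ : ∀ i, B i j₂ = c₂ * (v : m₁ → L) i := by
    intro i
    have h' := congrFun (congrArg Subtype.val hc₂) i
    simp only [Matrix.mulVec_single, mul_one] at h'
    simpa using h'.symm
  rw [e₁ i₁, e₁ i₂, e₂ i₁, e₂ i₂]; ring

/-- The equivalence between a disjoint union of finsets and the union. -/
private def unionEquiv {ι : Type*} [DecidableEq ι] (T₁ T₂ : Finset ι)
    (h : ∀ a ∈ T₁, a ∉ T₂) :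
    ({x // x ∈ T₁} ⊕ {x // x ∈ T₂}) ≃ {x // x ∈ T₁ ∪ T₂} where
  toFun := Sum.elim (fun i => ⟨i.1, Finset.mem_union_left _ i.2⟩)
    (fun j => ⟨j.1, Finset.mem_union_right _ j.2⟩)
  invFun r := if hr : r.1 ∈ T₁ then Sum.inl ⟨r.1, hr⟩ else
    Sum.inr ⟨r.1, by
      rcases Finset.mem_union.mp r.2 with h' | h'
      · exact absurd h' hr
      · exact h'⟩
  left_inv := by
    rintro (i | j)
    · simp
    · have : j.1 ∉ T₁ := fun hh => h j.1 hh j.2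
      simp [this]
  right_inv r := by
    by_cases hr : r.1 ∈ T₁ <;> simp [hr]

private lemma pminor_empty {ι : Type*} [DecidableEq ι] (C : Matrix ι ι K) :
    pminor C (∅ : Finset ι) = 1 := by
  haveI : IsEmpty {x // x ∈ (∅ : Finset ι)} := ⟨fun a => Finset.notMem_empty a.1 a.2⟩
  exact Matrix.det_isEmpty

private lemma pminor_singleton {ι : Type*} [DecidableEq ι] (C : Matrix ι ι K) (t : ι) :
    pminor C ({t} : Finset ι) = C t t := by
  haveI : Unique {x // x ∈ ({t} : Finset ι)} :=
    ⟨⟨⟨t, Finset.mem_singleton_self t⟩⟩, fun a => Subtype.ext (Finset.mem_singleton.mp a.2)⟩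
  rw [pminor, Matrix.det_unique]
  have ha : ((default : {x // x ∈ ({t} : Finset ι)}) : ι) = t :=
    Finset.mem_singleton.mp (default : {x // x ∈ ({t} : Finset ι)}).2
  show C ((default : {x // x ∈ ({t} : Finset ι)}) : ι) _ = C t t
  rw [ha]

/-- Determinant of a principal submatrix indexed by a union with rank-one cross blocks. -/
private lemma det_union_formula {ι : Type*} [DecidableEq ι]
    (C : Matrix ι ι K) (T₁ T₂ : Finset ι) (hdisj : ∀ a ∈ T₁, a ∉ T₂)
    (x w y z : ι → K)
    (hxy : ∀ i ∈ T₁, ∀ j ∈ T₂, C i j = x i * y j)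
    (hzw : ∀ j ∈ T₂, ∀ i ∈ T₁, C j i = z j * w i) :
    pminor C (T₁ ∪ T₂) = pminor C T₁ * pminor C T₂
      - (∑ i : {a // a ∈ T₁}, x i.1 *
          ((subm C T₁ T₁).updateRow i (fun j => w j.1)).det)
        * (∑ j : {a // a ∈ T₂}, z j.1 *
          ((subm C T₂ T₂).updateRow j (fun i => y i.1)).det) := by
  classical
  set e := unionEquiv T₁ T₂ hdisj with he
  rw [pminor, ← Matrix.det_submatrix_equiv_self e (subm C (T₁ ∪ T₂) (T₁ ∪ T₂))]
  have hblocks : (subm C (T₁ ∪ T₂) (T₁ ∪ T₂)).submatrix (⇑e) (⇑e)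
      = Matrix.fromBlocks (subm C T₁ T₁)
          (Matrix.of fun (i : {a // a ∈ T₁}) (j : {a // a ∈ T₂}) => x i.1 * y j.1)
          (Matrix.of fun (j : {a // a ∈ T₂}) (i : {a // a ∈ T₁}) => z j.1 * w i.1)
          (subm C T₂ T₂) := by
    funext r c
    rcases r with i | j <;> rcases c with i' | j' <;>
      simp only [Matrix.submatrix_apply, he, unionEquiv, Equiv.coe_fn_mk, Sum.elim_inl,
        Sum.elim_inr, subm, Matrix.of_apply, Matrix.fromBlocks_apply₁₁,
        Matrix.fromBlocks_apply₁₂, Matrix.fromBlocks_apply₂₁, Matrix.fromBlocks_apply₂₂]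
    · exact hxy i.1 i.2 j'.1 j'.2
    · exact hzw j.1 j.2 i'.1 i'.2
  rw [hblocks, det_fromBlocks_rankOne]
  rfl

/-- Expansion of a principal minor after adjoining one extra index. -/
private lemma pminor_union_singleton {ι : Type*} [DecidableEq ι]
    (C : Matrix ι ι K) (T : Finset ι) (t : ι) (ht : t ∉ T) :
    pminor C (T ∪ {t}) = C t t * pminor C T
      - ∑ i : {a // a ∈ T}, C i.1 t *
          ((subm C T T).updateRow i (fun j => C t j.1)).det := by
  classical
  have hdisj : ∀ a ∈ T, a ∉ ({t} : Finset ι) := by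
    intro a ha hat
    rw [Finset.mem_singleton] at hat
    subst hat; exact ht ha
  have := det_union_formula C T {t} hdisj
    (fun i => C i t) (fun i => C t i) (fun _ => 1) (fun _ => 1)
    (by intro i _ j hj; rw [Finset.mem_singleton] at hj; subst hj; ring)
    (by intro j hj i _; rw [Finset.mem_singleton] at hj; subst hj; ring)
  rw [this, pminor_singleton]
  haveI : Unique {x // x ∈ ({t} : Finset ι)} :=
    ⟨⟨⟨t, Finset.mem_singleton_self t⟩⟩, fun a => Subtype.ext (Finset.mem_singleton.mp a.2)⟩
  have hsum2 : (∑ j : {a // a ∈ ({t} : Finset ι)}, (1 : K) *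
      ((subm C {t} {t}).updateRow j (fun _ => 1)).det) = 1 := by
    rw [Fintype.sum_unique, Matrix.det_unique, Matrix.updateRow_self]
    ring
  rw [hsum2]
  ring

private lemma pminor_pair {ι : Type*} [DecidableEq ι]
    (C : Matrix ι ι K) (s t : ι) (hst : s ≠ t) :
    pminor C ({s, t} : Finset ι) = C s s * C t t - C s t * C t s := by
  classical
  have hst' : t ∉ ({s} : Finset ι) := by simp [Ne.symm hst]
  have h := pminor_union_singleton C {s} t hst'
  haveI : Unique {x // x ∈ ({s} : Finset ι)} :=
    ⟨⟨⟨s, Finset.mem_singleton_self s⟩⟩, fun a => Subtype.ext (Finset.mem_singleton.mp a.2)⟩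
  rw [Fintype.sum_unique, Matrix.det_unique, Matrix.updateRow_self, pminor_singleton] at h
  have ha : ((default : {x // x ∈ ({s} : Finset ι)}) : ι) = s :=
    Finset.mem_singleton.mp (default : {x // x ∈ ({s} : Finset ι)}).2
  rw [ha] at h
  have hset : ({s} : Finset ι) ∪ {t} = {s, t} := by
    rw [Finset.insert_eq]
  rw [hset] at h
  rw [h]
  ring

end Aux

/-- Gluing principal minor equivalent pieces along a cut. -/
theorem pme_glue_along_cut {n : ℕ} {K : Type*} [Field K]
    (A M N : Matrix (Fin n) (Fin n) K)
    (hA : ∀ i j : Fin n, i ≠ j → A i j ≠ 0)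
    (S : Finset (Fin n)) (hS : IsCut A S)
    (s t : Fin n) (hs : s ∈ S) (ht : t ∉ S)
    (hM : ∀ T : Finset (Fin n), T.Nonempty → T ⊆ insert t S → pminor M T = pminor A T)
    (hN : ∀ T : Finset (Fin n), T.Nonempty → T ⊆ insert s Sᶜ → pminor N T = pminor A T) :
    N s t ≠ 0 ∧ N t s ≠ 0 ∧ M s t ≠ 0 ∧ M t s ≠ 0 ∧
      PME (Matrix.of fun i j =>
        if i ∈ S then
          (if j ∈ S then M i j else M i t * N s j / N s t)
        else
          (if j ∈ S then N i s * M t j / N t s else N i j)) A := by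
  classical
  obtain ⟨-, -, -, hr1, hr2⟩ := hS
  have hst : s ≠ t := fun h => ht (h ▸ hs)
  have hAst : A s t ≠ 0 := hA s t hst
  have hAts : A t s ≠ 0 := hA t s hst.symm
  have hsub_st_N : ({s, t} : Finset (Fin n)) ⊆ insert s Sᶜ := by
    intro a ha
    rcases Finset.mem_insert.mp ha with h | h
    · exact h ▸ Finset.mem_insert_self _ _
    · rw [Finset.mem_singleton] at h
      exact h ▸ Finset.mem_insert_of_mem (Finset.mem_compl.mpr ht)
  have hsub_st_M : ({s, t} : Finset (Fin n)) ⊆ insert t S := by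
    intro a ha
    rcases Finset.mem_insert.mp ha with h | h
    · exact h ▸ Finset.mem_insert_of_mem hs
    · rw [Finset.mem_singleton] at h
      exact h ▸ Finset.mem_insert_self _ _
  have hNss : N s s = A s s := by
    have h' := hN {s} ⟨s, Finset.mem_singleton_self s⟩
      (by intro a ha; rw [Finset.mem_singleton] at ha; exact ha ▸ Finset.mem_insert_self _ _)
    rwa [pminor_singleton, pminor_singleton] at h'
  have hNtt : N t t = A t t := by
    have h' := hN {t} ⟨t, Finset.mem_singleton_self t⟩
      (by
        intro a ha; rw [Finset.mem_singleton] at ha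
        exact ha ▸ Finset.mem_insert_of_mem (Finset.mem_compl.mpr ht))
    rwa [pminor_singleton, pminor_singleton] at h'
  have hMss : M s s = A s s := by
    have h' := hM {s} ⟨s, Finset.mem_singleton_self s⟩
      (by intro a ha; rw [Finset.mem_singleton] at ha; exact ha ▸ Finset.mem_insert_of_mem hs)
    rwa [pminor_singleton, pminor_singleton] at h'
  have hMtt : M t t = A t t := by
    have h' := hM {t} ⟨t, Finset.mem_singleton_self t⟩
      (by intro a ha; rw [Finset.mem_singleton] at ha; exact ha ▸ Finset.mem_insert_self _ _)
    rwa [pminor_singleton, pminor_singleton] at h'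
  have hNpair : N s t * N t s = A s t * A t s := by
    have h2 := hN {s, t} ⟨s, Finset.mem_insert_self _ _⟩ hsub_st_N
    rw [pminor_pair N s t hst, pminor_pair A s t hst] at h2
    linear_combination -h2 + N t t * hNss + A s s * hNtt
  have hMpair : M s t * M t s = A s t * A t s := by
    have h2 := hM {s, t} ⟨s, Finset.mem_insert_self _ _⟩ hsub_st_M
    rw [pminor_pair M s t hst, pminor_pair A s t hst] at h2
    linear_combination -h2 + M t t * hMss + A s s * hMtt
  have hNst : N s t ≠ 0 := fun h0 => (mul_ne_zero hAst hAts) (by rw [← hNpair, h0, zero_mul])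
  have hNts : N t s ≠ 0 := fun h0 => (mul_ne_zero hAst hAts) (by rw [← hNpair, h0, mul_zero])
  have hMst : M s t ≠ 0 := fun h0 => (mul_ne_zero hAst hAts) (by rw [← hMpair, h0, zero_mul])
  have hMts : M t s ≠ 0 := fun h0 => (mul_ne_zero hAst hAts) (by rw [← hMpair, h0, mul_zero])
  refine ⟨hNst, hNts, hMst, hMts, ?_⟩
  set A' : Matrix (Fin n) (Fin n) K := Matrix.of fun i j =>
      if i ∈ S then
        (if j ∈ S then M i j else M i t * N s j / N s t)
      else
        (if j ∈ S then N i s * M t j / N t s else N i j) with hA'd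
  intro T hT
  set T₁ := T ∩ S with hT₁d
  set T₂ := T \ S with hT₂d
  have hTu : T₁ ∪ T₂ = T := by
    rw [hT₁d, hT₂d, Finset.union_comm]
    exact Finset.sdiff_union_inter T S
  have hdisj : ∀ a ∈ T₁, a ∉ T₂ := fun a ha h' =>
    (Finset.mem_sdiff.mp h').2 (Finset.mem_inter.mp ha).2
  have hT₁S : T₁ ⊆ S := fun a ha => (Finset.mem_inter.mp ha).2
  have hT₂S : ∀ a ∈ T₂, a ∉ S := fun a ha => (Finset.mem_sdiff.mp ha).2
  have htT₁ : t ∉ T₁ := fun h' => ht (hT₁S h')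
  have hsT₂ : s ∉ T₂ := fun h' => hT₂S s h' hs
  have hMT₁sub : T₁ ⊆ insert t S := fun a ha => Finset.mem_insert_of_mem (hT₁S ha)
  have hMT₁t : T₁ ∪ {t} ⊆ insert t S := by
    intro a ha
    rcases Finset.mem_union.mp ha with h | h
    · exact Finset.mem_insert_of_mem (hT₁S h)
    · rw [Finset.mem_singleton] at h; exact h ▸ Finset.mem_insert_self _ _
  have hNT₂sub : T₂ ⊆ insert s Sᶜ := fun a ha =>
    Finset.mem_insert_of_mem (Finset.mem_compl.mpr (hT₂S a ha))
  have hNT₂s : T₂ ∪ {s} ⊆ insert s Sᶜ := by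
    intro a ha
    rcases Finset.mem_union.mp ha with h | h
    · exact Finset.mem_insert_of_mem (Finset.mem_compl.mpr (hT₂S a h))
    · rw [Finset.mem_singleton] at h; exact h ▸ Finset.mem_insert_self _ _
  have hPM1 : pminor M T₁ = pminor A T₁ := by
    rcases Finset.eq_empty_or_nonempty T₁ with h | h
    · rw [h, pminor_empty, pminor_empty]
    · exact hM T₁ h hMT₁sub
  have hPN2 : pminor N T₂ = pminor A T₂ := by
    rcases Finset.eq_empty_or_nonempty T₂ with h | h
    · rw [h, pminor_empty, pminor_empty]
    · exact hN T₂ h hNT₂sub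
  have hPM1t : pminor M (T₁ ∪ {t}) = pminor A (T₁ ∪ {t}) :=
    hM _ ⟨t, Finset.mem_union_right _ (Finset.mem_singleton_self t)⟩ hMT₁t
  have hPN2s : pminor N (T₂ ∪ {s}) = pminor A (T₂ ∪ {s}) :=
    hN _ ⟨s, Finset.mem_union_right _ (Finset.mem_singleton_self s)⟩ hNT₂s
  -- rank-one structure of the cross blocks of `A`
  have hAxy : ∀ i ∈ T₁, ∀ j ∈ T₂, A i j = (A i t) * (A s j / A s t) := by
    intro i hi j hj
    have hiS := hT₁S hi
    have hjS := hT₂S j hj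
    have key := rank_le_one_cross hr1 (⟨i, hiS⟩ : {x // x ∈ S}) ⟨s, hs⟩
      (⟨j, Finset.mem_sdiff.mpr ⟨Finset.mem_univ _, hjS⟩⟩ : {x // x ∈ Finset.univ \ S})
      ⟨t, Finset.mem_sdiff.mpr ⟨Finset.mem_univ _, ht⟩⟩
    simp only [subm, Matrix.of_apply] at key
    have h' : A i j = (A i t * A s j) / A s t := by
      rw [eq_div_iff hAst]; linear_combination key
    rw [h', mul_div_assoc]
  have hAzw : ∀ j ∈ T₂, ∀ i ∈ T₁, A j i = (A j s) * (A t i / A t s) := by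
    intro j hj i hi
    have hiS := hT₁S hi
    have hjS := hT₂S j hj
    have key := rank_le_one_cross hr2
      (⟨j, Finset.mem_sdiff.mpr ⟨Finset.mem_univ _, hjS⟩⟩ : {x // x ∈ Finset.univ \ S})
      ⟨t, Finset.mem_sdiff.mpr ⟨Finset.mem_univ _, ht⟩⟩
      (⟨i, hiS⟩ : {x // x ∈ S}) ⟨s, hs⟩
    simp only [subm, Matrix.of_apply] at key
    have h' : A j i = (A j s * A t i) / A t s := by
      rw [eq_div_iff hAts]; linear_combination key
    rw [h', mul_div_assoc]
  -- cross blocks of `A'`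
  have hA'xy : ∀ i ∈ T₁, ∀ j ∈ T₂, A' i j = (M i t) * (N s j / N s t) := by
    intro i hi j hj
    simp [hA'd, hT₁S hi, hT₂S j hj, mul_div_assoc]
  have hA'zw : ∀ j ∈ T₂, ∀ i ∈ T₁, A' j i = (N j s) * (M t i / N t s) := by
    intro j hj i hi
    simp [hA'd, hT₁S hi, hT₂S j hj, mul_div_assoc]
  -- diagonal blocks of `A'`
  have hsubM : subm A' T₁ T₁ = subm M T₁ T₁ := by
    funext i j
    simp [subm, hA'd, hT₁S i.2, hT₁S j.2]
  have hsubN : subm A' T₂ T₂ = subm N T₂ T₂ := by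
    funext i j
    simp [subm, hA'd, hT₂S i.1 i.2, hT₂S j.1 j.2]
  have hpmA'1 : pminor A' T₁ = pminor M T₁ := by rw [pminor, pminor, hsubM]
  have hpmA'2 : pminor A' T₂ = pminor N T₂ := by rw [pminor, pminor, hsubN]
  -- bordered expansions
  have hGM : (∑ i : {a // a ∈ T₁}, M i.1 t *
      ((subm M T₁ T₁).updateRow i (fun j => M t j.1)).det)
      = M t t * pminor M T₁ - pminor M (T₁ ∪ {t}) := by
    linear_combination (pminor_union_singleton M T₁ t htT₁)
  have hGA1 : (∑ i : {a // a ∈ T₁}, A i.1 t *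
      ((subm A T₁ T₁).updateRow i (fun j => A t j.1)).det)
      = A t t * pminor A T₁ - pminor A (T₁ ∪ {t}) := by
    linear_combination (pminor_union_singleton A T₁ t htT₁)
  have hGN : (∑ j : {a // a ∈ T₂}, N j.1 s *
      ((subm N T₂ T₂).updateRow j (fun i => N s i.1)).det)
      = N s s * pminor N T₂ - pminor N (T₂ ∪ {s}) := by
    linear_combination (pminor_union_singleton N T₂ s hsT₂)
  have hGA2 : (∑ j : {a // a ∈ T₂}, A j.1 s *
      ((subm A T₂ T₂).updateRow j (fun i => A s i.1)).det)
      = A s s * pminor A T₂ - pminor A (T₂ ∪ {s}) := by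
    linear_combination (pminor_union_singleton A T₂ s hsT₂)
  -- the four sums with scalars pulled out
  have hsum1 : (∑ i : {a // a ∈ T₁}, M i.1 t *
      ((subm A' T₁ T₁).updateRow i (fun j => M t j.1 / N t s)).det)
      = (N t s)⁻¹ * (A t t * pminor A T₁ - pminor A (T₁ ∪ {t})) := by
    rw [hsubM]
    have hrow : (fun j : {a // a ∈ T₁} => M t j.1 / N t s)
        = (N t s)⁻¹ • (fun j : {a // a ∈ T₁} => M t j.1) := by
      funext j
      simp [div_eq_mul_inv, mul_comm]
    rw [hrow]
    rw [show (∑ i : {a // a ∈ T₁}, M i.1 t *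
        ((subm M T₁ T₁).updateRow i ((N t s)⁻¹ • fun j : {a // a ∈ T₁} => M t j.1)).det)
        = (N t s)⁻¹ * (∑ i : {a // a ∈ T₁}, M i.1 t *
          ((subm M T₁ T₁).updateRow i (fun j : {a // a ∈ T₁} => M t j.1)).det) by
      rw [Finset.mul_sum]
      exact Finset.sum_congr rfl fun i _ => by rw [Matrix.det_updateRow_smul]; ring]
    rw [hGM, hMtt, hPM1, hPM1t]
  have hsum1A : (∑ i : {a // a ∈ T₁}, A i.1 t *
      ((subm A T₁ T₁).updateRow i (fun j => A t j.1 / A t s)).det)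
      = (A t s)⁻¹ * (A t t * pminor A T₁ - pminor A (T₁ ∪ {t})) := by
    have hrow : (fun j : {a // a ∈ T₁} => A t j.1 / A t s)
        = (A t s)⁻¹ • (fun j : {a // a ∈ T₁} => A t j.1) := by
      funext j
      simp [div_eq_mul_inv, mul_comm]
    rw [hrow]
    rw [show (∑ i : {a // a ∈ T₁}, A i.1 t *
        ((subm A T₁ T₁).updateRow i ((A t s)⁻¹ • fun j : {a // a ∈ T₁} => A t j.1)).det)
        = (A t s)⁻¹ * (∑ i : {a // a ∈ T₁}, A i.1 t *
          ((subm A T₁ T₁).updateRow i (fun j : {a // a ∈ T₁} => A t j.1)).det) by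
      rw [Finset.mul_sum]
      exact Finset.sum_congr rfl fun i _ => by rw [Matrix.det_updateRow_smul]; ring]
    rw [hGA1]
  have hsum2 : (∑ j : {a // a ∈ T₂}, N j.1 s *
      ((subm A' T₂ T₂).updateRow j (fun i => N s i.1 / N s t)).det)
      = (N s t)⁻¹ * (A s s * pminor A T₂ - pminor A (T₂ ∪ {s})) := by
    rw [hsubN]
    have hrow : (fun i : {a // a ∈ T₂} => N s i.1 / N s t)
        = (N s t)⁻¹ • (fun i : {a // a ∈ T₂} => N s i.1) := by
      funext i
      simp [div_eq_mul_inv, mul_comm]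
    rw [hrow]
    rw [show (∑ j : {a // a ∈ T₂}, N j.1 s *
        ((subm N T₂ T₂).updateRow j ((N s t)⁻¹ • fun i : {a // a ∈ T₂} => N s i.1)).det)
        = (N s t)⁻¹ * (∑ j : {a // a ∈ T₂}, N j.1 s *
          ((subm N T₂ T₂).updateRow j (fun i : {a // a ∈ T₂} => N s i.1)).det) by
      rw [Finset.mul_sum]
      exact Finset.sum_congr rfl fun j _ => by rw [Matrix.det_updateRow_smul]; ring]
    rw [hGN, hNss, hPN2, hPN2s]
  have hsum2A : (∑ j : {a // a ∈ T₂}, A j.1 s *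
      ((subm A T₂ T₂).updateRow j (fun i => A s i.1 / A s t)).det)
      = (A s t)⁻¹ * (A s s * pminor A T₂ - pminor A (T₂ ∪ {s})) := by
    have hrow : (fun i : {a // a ∈ T₂} => A s i.1 / A s t)
        = (A s t)⁻¹ • (fun i : {a // a ∈ T₂} => A s i.1) := by
      funext i
      simp [div_eq_mul_inv, mul_comm]
    rw [hrow]
    rw [show (∑ j : {a // a ∈ T₂}, A j.1 s *
        ((subm A T₂ T₂).updateRow j ((A s t)⁻¹ • fun i : {a // a ∈ T₂} => A s i.1)).det)
        = (A s t)⁻¹ * (∑ j : {a // a ∈ T₂}, A j.1 s *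
          ((subm A T₂ T₂).updateRow j (fun i : {a // a ∈ T₂} => A s i.1)).det) by
      rw [Finset.mul_sum]
      exact Finset.sum_congr rfl fun j _ => by rw [Matrix.det_updateRow_smul]; ring]
    rw [hGA2]
  -- assemble
  rw [← hTu]
  rw [det_union_formula A' T₁ T₂ hdisj (fun i => M i t) (fun i => M t i / N t s)
    (fun j => N s j / N s t) (fun j => N j s) hA'xy hA'zw]
  rw [det_union_formula A T₁ T₂ hdisj (fun i => A i t) (fun i => A t i / A t s)
    (fun j => A s j / A s t) (fun j => A j s) hAxy hAzw]
  rw [hsum1, hsum1A, hsum2, hsum2A, hpmA'1, hpmA'2, hPM1, hPN2]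
  have hinv : (N t s)⁻¹ * (N s t)⁻¹ = (A t s)⁻¹ * (A s t)⁻¹ := by
    rw [← mul_inv, ← mul_inv]
    congr 1
    linear_combination hNpair
  linear_combination (-((A t t * pminor A T₁ - pminor A (T₁ ∪ {t})) *
    (A s s * pminor A T₂ - pminor A (T₂ ∪ {s})))) * hinv

end PMAP
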